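/- If {s_k} and {t_k} are sequences of least nonnegative residues mod m such that the series ∑ m^k s_k and ∑ m^k t_k both converge in D_m to the same limit, then s_k = t_k for every k. -/

import Mathlib

def Dm (m : ℕ) : Set ℚ := {q : ℚ | Nat.Coprime q.den m}

/-- The `m`-adic norm: `|a/b|_m = m^{-k}` where `m^k` is the largest power of `m`
dividing the numerator `a` (in lowest terms), and `|0|_m = 0`. -/
noncomputable def mnorm (m : ℕ) (q : ℚ) : ℝ :=
  if q = 0 then 0 else (m : ℝ) ^ (-(m.maxPowDiv q.num.natAbs : ℤ))

noncomputable def mdist (m : ℕ) (x y : ℚ) : ℝ := mnorm m (x - y)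

theorem series_unique (m : ℕ) (hm : 2 ≤ m) (s t : ℕ → ℕ)
    (hs : ∀ k, s k ≤ m - 1) (ht : ∀ k, t k ≤ m - 1) (L : ℚ) (hL : L ∈ Dm m)
    (hconvs : Filter.Tendsto
      (fun n => mdist m (∑ k ∈ Finset.range n, (m : ℚ) ^ k * (s k : ℚ)) L)
      Filter.atTop (nhds 0))
    (hconvt : Filter.Tendsto
      (fun n => mdist m (∑ k ∈ Finset.range n, (m : ℚ) ^ k * (t k : ℚ)) L)
      Filter.atTop (nhds 0)) :
    ∀ k, s k = t k := by
  have hm1 : 1 < m := hm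
  have hmQ : ((m : ℚ) : ℚ) ≠ 0 := by positivity
  have hm1R : (1 : ℝ) < m := by exact_mod_cast hm1
  -- divisibility-by-m^n predicate
  let P : ℕ → ℚ → Prop := fun n q => ∃ r : ℚ, Nat.Coprime r.den m ∧ q = (m : ℚ) ^ n * r
  have hPadd : ∀ n x y, P n x → P n y → P n (x + y) := by
    rintro n x y ⟨r, hr, rfl⟩ ⟨r', hr', rfl⟩
    refine ⟨r + r', ?_, by ring⟩
    exact Nat.Coprime.coprime_dvd_left (Rat.add_den_dvd r r') (Nat.Coprime.mul hr hr')
  have hPneg : ∀ n x, P n x → P n (-x) := by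
    rintro n x ⟨r, hr, rfl⟩
    exact ⟨-r, by simpa using hr, by ring⟩
  -- from convergence: P n (L - partial sum) for all n
  have key : ∀ f : ℕ → ℕ, Filter.Tendsto
      (fun n => mdist m (∑ k ∈ Finset.range n, (m : ℚ) ^ k * (f k : ℚ)) L)
      Filter.atTop (nhds 0) → ∀ n, P n (L - ∑ k ∈ Finset.range n, (m : ℚ) ^ k * (f k : ℚ)) := by
    intro f hconv n
    set S : ℕ → ℚ := fun n => ∑ k ∈ Finset.range n, (m : ℚ) ^ k * (f k : ℚ) with hS
    have hε : (0 : ℝ) < (m : ℝ) ^ (-(n : ℤ)) := by positivity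
    obtain ⟨N, hN⟩ := (Metric.tendsto_atTop.mp hconv) _ hε
    set j := max n N with hj
    have hjn : n ≤ j := le_max_left _ _
    have h1 : mnorm m (S j - L) < (m : ℝ) ^ (-(n : ℤ)) := by
      have := hN j (le_max_right _ _)
      have hnn : 0 ≤ mdist m (S j) L := by
        unfold mdist mnorm; split <;> positivity
      rw [Real.dist_eq, sub_zero, abs_of_nonneg hnn] at this
      exact this
    -- P n (S j - L)
    have h2 : P n (S j - L) := by
      by_cases h0 : S j - L = 0
      · exact ⟨0, by simp, by simp [h0]⟩
      · set q := S j - L with hq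
        have hval : mnorm m q = (m : ℝ) ^ (-(m.maxPowDiv q.num.natAbs : ℤ)) := by
          unfold mnorm; rw [if_neg h0]
        rw [hval] at h1
        have hlt : -(m.maxPowDiv q.num.natAbs : ℤ) < -(n : ℤ) :=
          (zpow_lt_zpow_iff_right₀ hm1R).mp h1
        have hle : n ≤ m.maxPowDiv q.num.natAbs := by omega
        have hdvdN : m ^ n ∣ q.num.natAbs :=
          dvd_trans (pow_dvd_pow m hle) (Nat.maxPowDiv.pow_dvd (p := m) (n := q.num.natAbs))
        have hdvd : ((m : ℤ)) ^ n ∣ q.num := by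
          refine Int.dvd_natAbs.mp ?_
          exact_mod_cast Int.natCast_dvd_natCast.mpr hdvdN
        -- q.den coprime to m
        have hden : Nat.Coprime q.den m := by
          have h3 : q.den ∣ (S j).den * L.den := by
            have : q = S j + (-L) := by rw [hq]; ring
            rw [this]
            simpa using Rat.add_den_dvd (S j) (-L)
          have hSden : (S j).den = 1 := by
            have : ∃ z : ℕ, S j = (z : ℚ) := ⟨∑ k ∈ Finset.range j, m ^ k * f k, by push_cast [hS]; ring_nf⟩
            obtain ⟨z, hz⟩ := this
            rw [hz]; exact Rat.den_natCast z
          rw [hSden, one_mul] at h3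
          exact Nat.Coprime.coprime_dvd_left h3 hL
        refine ⟨Rat.divInt (q.num / (m : ℤ) ^ n) q.den, ?_, ?_⟩
        · have := Rat.den_dvd (q.num / (m : ℤ) ^ n) (q.den : ℤ)
          have h4 : (Rat.divInt (q.num / (m : ℤ) ^ n) q.den).den ∣ q.den := by
            exact_mod_cast this
          exact Nat.Coprime.coprime_dvd_left h4 hden
        · rw [Rat.divInt_eq_div]
          have heq : (m : ℚ) ^ n * (((q.num / (m : ℤ) ^ n : ℤ) : ℚ) / ((q.den : ℤ) : ℚ))
              = (((m : ℤ) ^ n * (q.num / (m : ℤ) ^ n) : ℤ) : ℚ) / (q.den : ℚ) := by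
            push_cast; ring
          rw [heq, Int.mul_ediv_cancel' hdvd, Rat.num_div_den]
    -- P n (S n - S j)  (tail is divisible by m^n)
    have h3 : P n (S n - S j) := by
      set c : ℕ := ∑ k ∈ Finset.Ico n j, m ^ (k - n) * f k with hc
      have htail : S j - S n = (m : ℚ) ^ n * (c : ℚ) := by
        rw [hc]
        rw [hS]
        rw [← Finset.sum_Ico_eq_sub _ hjn]
        push_cast
        rw [Finset.mul_sum]
        refine Finset.sum_congr rfl ?_
        intro k hk
        have hnk : n ≤ k := (Finset.mem_Ico.mp hk).1
        rw [← mul_assoc, ← pow_add]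
        congr 2
        omega
      have h3' : P n (S j - S n) := ⟨(c : ℚ), by simp [Nat.coprime_one_left], htail⟩
      have := hPneg n _ h3'
      rwa [neg_sub] at this
    have h3' : P n (S j - S n) := by
      have := hPneg n _ h3; rwa [neg_sub] at this
    have h4 := hPadd n _ _ (hPneg n _ h2) h3'
    have heq : -(S j - L) + (S j - S n) = L - S n := by ring
    rwa [heq] at h4
  -- difference of partial sums, as an integer
  set x : ℕ → ℤ := fun n => ∑ k ∈ Finset.range n, (m : ℤ) ^ k * ((s k : ℤ) - (t k : ℤ)) with hx
  have hxP : ∀ n, (m : ℤ) ^ n ∣ x n := by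
    intro n
    have h1 := key s hconvs n
    have h2 := key t hconvt n
    have h3 : P n ((x n : ℚ)) := by
      have hc1 : ((x n : ℚ)) = ∑ k ∈ Finset.range n,
          ((m : ℚ) ^ k * (s k : ℚ) - (m : ℚ) ^ k * (t k : ℚ)) := by
        rw [hx]
        push_cast
        exact Finset.sum_congr rfl (fun k _ => by ring)
      have hcast : ((x n : ℚ)) = (L - ∑ k ∈ Finset.range n, (m : ℚ) ^ k * (t k : ℚ))
          + -(L - ∑ k ∈ Finset.range n, (m : ℚ) ^ k * (s k : ℚ)) := by
        rw [hc1, Finset.sum_sub_distrib]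
        ring
      rw [hcast]
      exact hPadd n _ _ h2 (hPneg n _ h1)
    obtain ⟨r, hr, hreq⟩ := h3
    have hrval : r = Rat.divInt (x n) ((m : ℤ) ^ n) := by
      rw [Rat.divInt_eq_div]
      push_cast
      rw [hreq]
      field_simp
    have hrden : r.den ∣ m ^ n := by
      have := Rat.den_dvd (x n) ((m : ℤ) ^ n)
      rw [← hrval] at this
      exact_mod_cast this
    have hrden1 : r.den = 1 := (hr.pow_right n).eq_one_of_dvd hrden
    have hrnum : ((r.num : ℚ)) = r := (Rat.den_eq_one_iff r).mp hrden1
    have hfin : ((x n : ℚ)) = ((m : ℤ) ^ n * r.num : ℤ) := by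
      push_cast [hrnum]; exact hreq
    have : x n = (m : ℤ) ^ n * r.num := by exact_mod_cast hfin
    exact ⟨r.num, this⟩
  -- conclude by strong induction
  intro k
  induction k using Nat.strong_induction_on with
  | _ k ih =>
    have hxk : x (k + 1) = (m : ℤ) ^ k * ((s k : ℤ) - (t k : ℤ)) := by
      simp only [hx, Finset.sum_range_succ]
      have : ∑ i ∈ Finset.range k, (m : ℤ) ^ i * ((s i : ℤ) - (t i : ℤ)) = 0 := by
        apply Finset.sum_eq_zero
        intro i hi
        rw [ih i (Finset.mem_range.mp hi)]
        ring
      rw [this, zero_add]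
    have hdvd := hxP (k + 1)
    rw [hxk, pow_succ] at hdvd
    have hmk : (m : ℤ) ^ k ≠ 0 := by positivity
    have hdvd2 : (m : ℤ) ∣ (s k : ℤ) - (t k : ℤ) :=
      (mul_dvd_mul_iff_left hmk).mp hdvd
    have h0 : (s k : ℤ) - (t k : ℤ) = 0 := by
      apply Int.eq_zero_of_abs_lt_dvd hdvd2
      have h1 := hs k; have h2 := ht k
      rw [abs_lt]
      omega
    omega
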